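/- Let f ∈ L¹_loc(ℝ^n) be such that h(x) = log⁺(M(fχ_Q)(x)/f_Q) for a cube Q with f ≥ 0 and f_Q = (1/|Q|)∫_Q f > 0. Then the average h_Q = (1/|Q|)∫_Q h(x) dx is bounded by a constant depending only on n: h_Q ≤ C(n). -/

import Mathlib

open MeasureTheory Metric Set


def cube (n : ℕ) (a : Fin n → ℝ) (h : ℝ) : Set (Fin n → ℝ) :=
  {x | ∀ i, a i ≤ x i ∧ x i ≤ a i + h}

lemma cube_eq_Icc (n : ℕ) (a : Fin n → ℝ) (h : ℝ) :
    cube n a h = Icc a (fun i => a i + h) := by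
  ext x; simp [cube, Pi.le_def, forall_and]

lemma volume_cube (n : ℕ) (a : Fin n → ℝ) (h : ℝ) (hh : 0 ≤ h) :
    volume (cube n a h) = ENNReal.ofReal (h ^ n) := by
  rw [cube_eq_Icc, Real.volume_Icc_pi]
  simp [ENNReal.ofReal_pow hh]

lemma measurableSet_cube (n : ℕ) (a : Fin n → ℝ) (h : ℝ) :
    MeasurableSet (cube n a h) := by
  rw [cube_eq_Icc]; exact measurableSet_Icc

lemma cube_eq_closedBall (n : ℕ) (a : Fin n → ℝ) (h : ℝ) (hh : 0 ≤ h) :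
    cube n a h = closedBall (fun i => a i + h / 2) (h / 2) := by
  ext x
  rw [mem_closedBall, dist_pi_le_iff (by linarith)]
  simp only [cube, mem_setOf_eq, Real.dist_eq]
  constructor
  · intro hx i; rw [abs_le]; constructor <;> linarith [(hx i).1, (hx i).2]
  · intro hx i; have := abs_le.1 (hx i); constructor <;> linarith [this.1, this.2]

lemma closedBall_eq_cube (n : ℕ) (c : Fin n → ℝ) (ρ : ℝ) (hρ : 0 ≤ ρ) :
    closedBall c ρ = cube n (fun i => c i - ρ) (2 * ρ) := by
  rw [cube_eq_closedBall n _ _ (by linarith), show 2 * ρ / 2 = ρ by ring]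
  congr 1
  funext i
  ring

/-- average over a cube is `> s` implies `s * h^n < ∫`. -/
lemma avg_lt_iff (n : ℕ) (g : (Fin n → ℝ) → ℝ) (a : Fin n → ℝ) (h : ℝ) (hh : 0 < h) (s : ℝ) :
    s < (volume (cube n a h)).toReal⁻¹ * ∫ y in cube n a h, g y ↔
      s * h ^ n < ∫ y in cube n a h, g y := by
  rw [volume_cube n a h hh.le, ENNReal.toReal_ofReal (by positivity)]
  rw [inv_mul_eq_div, lt_div_iff₀ (by positivity)]

/-- Rationalization: a point in a cube of positive average admits a rational cube. -/
lemma exists_rat_cube (n : ℕ) (g : (Fin n → ℝ) → ℝ) (hg : Integrable g) (hg0 : ∀ x, 0 ≤ g x)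
    (s : ℝ) (x : Fin n → ℝ) (a : Fin n → ℝ) (h : ℝ) (hh : 0 < h) (hx : x ∈ cube n a h)
    (havg : s < (volume (cube n a h)).toReal⁻¹ * ∫ y in cube n a h, g y) :
    ∃ (q : Fin n → ℚ) (r : ℚ), 0 < (r : ℝ) ∧ x ∈ cube n (fun i => (q i : ℝ)) (r : ℝ) ∧
      s < (volume (cube n (fun i => (q i : ℝ)) (r : ℝ))).toReal⁻¹ *
        ∫ y in cube n (fun i => (q i : ℝ)) (r : ℝ), g y := by
  rw [avg_lt_iff n g a h hh s] at havg
  -- pick δ > 0 with s * (h + 2δ)^n < ∫_{cube a h} g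
  obtain ⟨δ, hδpos, hδ⟩ : ∃ δ > 0, s * (h + 2 * δ) ^ n < ∫ y in cube n a h, g y := by
    have hcont : Filter.Tendsto (fun δ : ℝ => s * (h + 2 * δ) ^ n) (nhdsWithin 0 (Ioi 0))
        (nhds (s * (h + 2 * 0) ^ n)) := by
      apply Filter.Tendsto.mono_left _ nhdsWithin_le_nhds
      exact (Continuous.tendsto (by continuity) 0)
    rw [show h + 2 * 0 = h by ring] at hcont
    have := hcont.eventually_lt_const havg
    exact (this.and self_mem_nhdsWithin).exists.imp (fun δ ⟨h1, h2⟩ => ⟨h2, h1⟩)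
  obtain ⟨r, hr1, hr2⟩ := exists_rat_btwn (show h + δ < h + 2 * δ by linarith)
  choose q hq1 hq2 using fun i => exists_rat_btwn (show a i - δ < a i by linarith)
  have hrpos : 0 < (r : ℝ) := by linarith
  have hsub : cube n a h ⊆ cube n (fun i => (q i : ℝ)) (r : ℝ) := by
    intro y hy i
    exact ⟨by linarith [(hy i).1, hq2 i], by linarith [(hy i).2, hq1 i, hr1]⟩
  refine ⟨q, r, hrpos, hsub hx, ?_⟩
  rw [avg_lt_iff n g _ _ hrpos s]
  have key : s * (r : ℝ) ^ n < ∫ y in cube n a h, g y := by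
    rcases lt_or_ge s 0 with hs | hs
    · calc s * (r:ℝ)^n < 0 := mul_neg_of_neg_of_pos hs (by positivity)
        _ ≤ _ := setIntegral_nonneg (measurableSet_cube n a h) (fun y _ => hg0 y)
    · have : s * (r : ℝ) ^ n ≤ s * (h + 2 * δ) ^ n :=
        mul_le_mul_of_nonneg_left (pow_le_pow_left₀ hrpos.le (by linarith) n) hs
      linarith
  calc s * (r : ℝ) ^ n < ∫ y in cube n a h, g y := key
    _ ≤ _ := setIntegral_mono_set hg.integrableOn (Filter.Eventually.of_forall (fun y => hg0 y))
        (HasSubset.Subset.eventuallyLE hsub)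

/-- The Hardy–Littlewood maximal function over cubes. -/
noncomputable def maximalFn (n : ℕ) (f : (Fin n → ℝ) → ℝ) (x : Fin n → ℝ) : ℝ :=
  sSup {v : ℝ | ∃ a h, 0 < h ∧ x ∈ cube n a h ∧
    v = (volume (cube n a h)).toReal⁻¹ * ∫ y in cube n a h, |f y|}

/-- Weak (1,1) bound for the uncentered maximal function over cubes. -/
lemma weak_bound (n : ℕ) (hn : 0 < n) (g : (Fin n → ℝ) → ℝ) (hg : Integrable g)
    (hg0 : ∀ x, 0 ≤ g x) (s : ℝ) (hs : 0 < s) :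
    volume {x | ∃ a h, 0 < h ∧ x ∈ cube n a h ∧
        s < (volume (cube n a h)).toReal⁻¹ * ∫ y in cube n a h, g y}
      ≤ ENNReal.ofReal ((4:ℝ) ^ n) * ENNReal.ofReal s⁻¹ * ENNReal.ofReal (∫ y, g y) := by
  classical
  set I : ℝ := ∫ y, g y with hI
  have hI0 : 0 ≤ I := integral_nonneg hg0
  -- index type of rational cubes
  set ι := (Fin n → ℚ) × ℚ
  set cR : ι → (Fin n → ℝ) := fun p => fun i => (p.1 i : ℝ) + (p.2 : ℝ) / 2 with hcR
  set rad : ι → ℝ := fun p => (p.2 : ℝ) / 2 with hrad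
  set Qp : ι → Set (Fin n → ℝ) := fun p => cube n (fun i => (p.1 i : ℝ)) (p.2 : ℝ) with hQp
  have hQball : ∀ p : ι, 0 < (p.2 : ℝ) → Qp p = closedBall (cR p) (rad p) :=
    fun p hp => cube_eq_closedBall n _ _ hp.le
  set t : Set ι := {p | 0 < (p.2 : ℝ) ∧
    s < (volume (Qp p)).toReal⁻¹ * ∫ y in Qp p, g y} with ht
  -- radii are uniformly bounded on t
  have hint_le : ∀ p : ι, ∫ y in Qp p, g y ≤ I :=
    fun p => setIntegral_le_integral hg (Filter.Eventually.of_forall hg0)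
  have hRbound : ∀ p ∈ t, rad p ≤ max 1 (I / s) := by
    rintro p ⟨hp1, hp2⟩
    rw [avg_lt_iff n g _ _ hp1 s] at hp2
    have hpow : (p.2 : ℝ) ^ n ≤ I / s := by
      rw [le_div_iff₀ hs]
      calc (p.2:ℝ)^n * s = s * (p.2:ℝ)^n := by ring
        _ ≤ I := le_trans hp2.le (hint_le p)
    have : (p.2 : ℝ) ≤ max 1 (I / s) := by
      rcases le_or_gt (p.2 : ℝ) 1 with h1 | h1
      · exact le_trans h1 (le_max_left _ _)
      · exact le_trans (le_trans (le_self_pow₀ h1.le hn.ne') hpow) (le_max_right _ _)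
    calc rad p = (p.2:ℝ)/2 := rfl
      _ ≤ (p.2 : ℝ) := by linarith
      _ ≤ _ := this
  -- Vitali
  obtain ⟨u, hut, hdisj, hcov⟩ := Vitali.exists_disjoint_subfamily_covering_enlargement_closedBall
    t cR rad (max 1 (I / s)) hRbound 4 (by norm_num)
  -- the set is covered by 4-times enlarged balls
  have hsubset : {x | ∃ a h, 0 < h ∧ x ∈ cube n a h ∧
      s < (volume (cube n a h)).toReal⁻¹ * ∫ y in cube n a h, g y}
      ⊆ ⋃ p ∈ u, closedBall (cR p) (4 * rad p) := by
    rintro x ⟨a, h, hh, hx, havg⟩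
    obtain ⟨q, r, hr, hxq, havq⟩ := exists_rat_cube n g hg hg0 s x a h hh hx havg
    have hpt : (q, r) ∈ t := ⟨hr, havq⟩
    obtain ⟨b, hbu, hbsub⟩ := hcov (q, r) hpt
    have hxball : x ∈ closedBall (cR (q, r)) (rad (q, r)) := by
      rw [← hQball (q, r) hr]; exact hxq
    exact mem_biUnion hbu (hbsub hxball)
  refine le_trans (measure_mono hsubset) ?_
  refine le_trans (measure_biUnion_le volume u.to_countable _) ?_
  -- bound each ball's volume
  have hb_rad_pos : ∀ p ∈ u, 0 < rad p := fun p hp => by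
    have := (hut hp).1; simp only [hrad]; linarith
  have hball_bound : ∀ p : u, volume (closedBall (cR p) (4 * rad p)) ≤
      ENNReal.ofReal ((4:ℝ)^n) * ENNReal.ofReal s⁻¹ * ∫⁻ y in Qp p, ENNReal.ofReal (g y) := by
    rintro ⟨p, hp⟩
    have hrp := hb_rad_pos p hp
    have h1 : volume (closedBall (cR p) (4 * rad p)) = ENNReal.ofReal ((8 * rad p) ^ n) := by
      rw [closedBall_eq_cube n _ _ (by linarith), volume_cube n _ _ (by linarith)]
      ring_nf
    have h2 : (8 * rad p : ℝ) ^ n = 4 ^ n * (p.2 : ℝ) ^ n := by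
      have : (8 : ℝ) * rad p = 4 * (p.2 : ℝ) := by simp only [hrad]; ring
      rw [this, mul_pow]
    have h3 : volume (Qp p) = ENNReal.ofReal ((p.2:ℝ) ^ n) := volume_cube n _ _ (hut hp).1.le
    have h4 : s * (p.2:ℝ)^n < ∫ y in Qp p, g y := (avg_lt_iff n g _ _ (hut hp).1 s).1 (hut hp).2
    have h5 : ((p.2:ℝ))^n ≤ s⁻¹ * ∫ y in Qp p, g y := by
      rw [← div_eq_inv_mul, le_div_iff₀ hs]; linarith
    have h6 : ENNReal.ofReal (∫ y in Qp p, g y) = ∫⁻ y in Qp p, ENNReal.ofReal (g y) :=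
      ofReal_integral_eq_lintegral_ofReal hg.integrableOn (Filter.Eventually.of_forall hg0)
    calc volume (closedBall (cR p) (4 * rad p)) = ENNReal.ofReal ((8 * rad p) ^ n) := h1
      _ = ENNReal.ofReal ((4:ℝ)^n * (p.2:ℝ)^n) := by rw [h2]
      _ = ENNReal.ofReal ((4:ℝ)^n) * ENNReal.ofReal ((p.2:ℝ)^n) :=
          ENNReal.ofReal_mul (by positivity)
      _ ≤ ENNReal.ofReal ((4:ℝ)^n) * ENNReal.ofReal (s⁻¹ * ∫ y in Qp p, g y) := by
          exact mul_le_mul_right (ENNReal.ofReal_le_ofReal h5) _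
      _ = ENNReal.ofReal ((4:ℝ)^n) * (ENNReal.ofReal s⁻¹ * ENNReal.ofReal (∫ y in Qp p, g y)) := by
          rw [ENNReal.ofReal_mul (by positivity)]
      _ = ENNReal.ofReal ((4:ℝ)^n) * ENNReal.ofReal s⁻¹ * ∫⁻ y in Qp p, ENNReal.ofReal (g y) := by
          rw [h6, mul_assoc]
  -- sum up
  have : Countable u := u.to_countable
  calc ∑' (p : u), volume (closedBall (cR p) (4 * rad p))
      ≤ ∑' (p : u), ENNReal.ofReal ((4:ℝ)^n) * ENNReal.ofReal s⁻¹ *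
          ∫⁻ y in Qp p, ENNReal.ofReal (g y) := ENNReal.tsum_le_tsum hball_bound
    _ = ENNReal.ofReal ((4:ℝ)^n) * ENNReal.ofReal s⁻¹ *
          ∑' (p : u), ∫⁻ y in Qp (p : ι), ENNReal.ofReal (g y) := by rw [ENNReal.tsum_mul_left]
    _ ≤ ENNReal.ofReal ((4:ℝ)^n) * ENNReal.ofReal s⁻¹ * ENNReal.ofReal I := by
        gcongr
        have hdisj' : Pairwise (Function.onFun Disjoint fun p : u => Qp (p : ι)) := by
          intro i j hij
          have : Disjoint (closedBall (cR i) (rad i)) (closedBall (cR j) (rad j)) :=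
            hdisj i.2 j.2 (Subtype.coe_injective.ne hij)
          rwa [← hQball _ (hut i.2).1, ← hQball _ (hut j.2).1] at this
        have hmeas : ∀ p : u, MeasurableSet (Qp (p : ι)) := fun p => measurableSet_cube n _ _
        rw [← lintegral_iUnion hmeas hdisj']
        rw [ofReal_integral_eq_lintegral_ofReal hg (Filter.Eventually.of_forall hg0)]
        exact setLIntegral_le_lintegral _ _

lemma maximalFn_nonneg (n : ℕ) (g : (Fin n → ℝ) → ℝ) (x : Fin n → ℝ) :
    0 ≤ maximalFn n g x := by
  apply Real.sSup_nonneg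
  rintro v ⟨a, h, hh, hx, rfl⟩
  have h1 : (0:ℝ) ≤ (volume (cube n a h)).toReal⁻¹ := by positivity
  have h2 : (0:ℝ) ≤ ∫ y in cube n a h, |g y| :=
    setIntegral_nonneg (measurableSet_cube n a h) (fun y _ => abs_nonneg _)
  positivity

lemma superlevel_subset (n : ℕ) (g : (Fin n → ℝ) → ℝ) (hg0 : ∀ x, 0 ≤ g x)
    (s : ℝ) (hs : 0 < s) :
    {x | s < maximalFn n g x} ⊆ {x | ∃ a h, 0 < h ∧ x ∈ cube n a h ∧
        s < (volume (cube n a h)).toReal⁻¹ * ∫ y in cube n a h, g y} := by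
  intro x hx
  simp only [mem_setOf_eq] at hx ⊢
  set S := {v : ℝ | ∃ a h, 0 < h ∧ x ∈ cube n a h ∧
    v = (volume (cube n a h)).toReal⁻¹ * ∫ y in cube n a h, |g y|} with hS
  have hne : S.Nonempty := by
    by_contra hemp
    rw [not_nonempty_iff_eq_empty] at hemp
    have : maximalFn n g x = 0 := by rw [maximalFn, ← hS, hemp, Real.sSup_empty]
    rw [this] at hx; linarith
  obtain ⟨v, ⟨a, h, hh, hxc, rfl⟩, hv⟩ := exists_lt_of_lt_csSup hne hx
  refine ⟨a, h, hh, hxc, ?_⟩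
  have habs : ∫ y in cube n a h, |g y| = ∫ y in cube n a h, g y :=
    setIntegral_congr_fun (measurableSet_cube n a h) (fun y _ => abs_of_nonneg (hg0 y))
  rwa [habs] at hv

/-- The average over `Q` of `log⁺(M(fχ_Q)/f_Q)` is bounded by a dimensional constant. -/
theorem stmt13 (n : ℕ) (hn : 0 < n) :
    ∃ C > (0 : ℝ), ∀ (a : Fin n → ℝ) (h : ℝ), 0 < h →
      ∀ f : (Fin n → ℝ) → ℝ, (∀ x, 0 ≤ f x) →
      MeasureTheory.IntegrableOn f (cube n a h) →
      0 < (volume (cube n a h)).toReal⁻¹ * ∫ x in cube n a h, f x →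
      (volume (cube n a h)).toReal⁻¹ * ∫ x in cube n a h,
        max (Real.log (maximalFn n ((cube n a h).indicator f) x /
          ((volume (cube n a h)).toReal⁻¹ * ∫ y in cube n a h, f y))) 0 ≤ C := by
  classical
  set T : ℝ := n * Real.log 4 with hT
  have hT0 : 0 < T := by
    have := Real.log_pos (by norm_num : (1:ℝ) < 4)
    have hn' : (1:ℝ) ≤ n := by exact_mod_cast hn
    calc (0:ℝ) < 1 * Real.log 4 := by linarith
      _ ≤ T := by rw [hT]; gcongr
  refine ⟨T + 1, by linarith, ?_⟩
  intro a h hh f hf hfint havg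
  set Q := cube n a h with hQ
  set V : ℝ := (volume Q).toReal with hV
  have hVeq : V = h ^ n := by rw [hV, hQ, volume_cube n a h hh.le, ENNReal.toReal_ofReal (by positivity)]
  have hVpos : 0 < V := by rw [hVeq]; positivity
  set lam : ℝ := (volume Q).toReal⁻¹ * ∫ x in Q, f x with hlam
  have hlampos : 0 < lam := havg
  set g : (Fin n → ℝ) → ℝ := Q.indicator f with hg
  have hg0 : ∀ x, 0 ≤ g x := fun x => indicator_nonneg (fun y _ => hf y) x
  have hgint : Integrable g := (integrable_indicator_iff (measurableSet_cube n a h)).2 hfint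
  have hIg : ∫ y, g y = lam * V := by
    rw [hg, integral_indicator (measurableSet_cube n a h), hlam, hV]
    field_simp
    exact (mul_div_cancel_left₀ _ hVpos.ne').symm
  set F : (Fin n → ℝ) → ℝ := fun x => max (Real.log (maximalFn n g x / lam)) 0 with hF
  show (volume Q).toReal⁻¹ * ∫ x in Q, F x ≤ T + 1
  by_cases hFint : IntegrableOn F Q
  swap
  · rw [integral_undef hFint, mul_zero]; linarith
  -- superlevel set measure bound
  have hlevel : ∀ t : ℝ, 0 < t → (volume.restrict Q) {x | t < F x} ≤
      min (volume Q) (ENNReal.ofReal ((4:ℝ)^n) * ENNReal.ofReal (V * Real.exp (-t))) := by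
    intro t ht
    refine le_min ?_ ?_
    · calc (volume.restrict Q) {x | t < F x} ≤ (volume.restrict Q) univ :=
            measure_mono (subset_univ _)
        _ = volume Q := Measure.restrict_apply_univ _
    · have hsub1 : {x | t < F x} ⊆ {x | lam * Real.exp t < maximalFn n g x} := by
        intro x hx
        simp only [hF, mem_setOf_eq, lt_max_iff] at hx
        rcases hx with hx | hx; swap; · linarith
        have hz : 0 ≤ maximalFn n g x / lam := div_nonneg (maximalFn_nonneg n g x) hlampos.le
        have hzpos : 0 < maximalFn n g x / lam := by
          rcases hz.lt_or_eq with h' | h'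
          · exact h'
          · rw [← h', Real.log_zero] at hx; linarith
        have : Real.exp t < maximalFn n g x / lam := by
          calc Real.exp t < Real.exp (Real.log (maximalFn n g x / lam)) := Real.exp_lt_exp.2 hx
            _ = _ := Real.exp_log hzpos
        rw [mem_setOf_eq, mul_comm, ← lt_div_iff₀ hlampos]
        exact this
      set s : ℝ := lam * Real.exp t with hs
      have hspos : 0 < s := mul_pos hlampos (Real.exp_pos t)
      calc (volume.restrict Q) {x | t < F x} ≤ volume {x | t < F x} :=
            MeasureTheory.Measure.restrict_apply_le _ _
        _ ≤ volume {x | s < maximalFn n g x} := measure_mono hsub1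
        _ ≤ volume {x | ∃ a' h', 0 < h' ∧ x ∈ cube n a' h' ∧
              s < (volume (cube n a' h')).toReal⁻¹ * ∫ y in cube n a' h', g y} :=
            measure_mono (superlevel_subset n g hg0 s hspos)
        _ ≤ ENNReal.ofReal ((4:ℝ)^n) * ENNReal.ofReal s⁻¹ * ENNReal.ofReal (∫ y, g y) :=
            weak_bound n hn g hgint hg0 s hspos
        _ = ENNReal.ofReal ((4:ℝ)^n) * ENNReal.ofReal (V * Real.exp (-t)) := by
            rw [mul_assoc, ← ENNReal.ofReal_mul (by positivity), hIg]
            congr 2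
            rw [hs, Real.exp_neg]
            field_simp
  -- layer cake
  have hlayer : ∫⁻ x in Q, ENNReal.ofReal (F x) =
      ∫⁻ t in Ioi (0:ℝ), (volume.restrict Q) {x | t < F x} :=
    lintegral_eq_lintegral_meas_lt _
      (Filter.Eventually.of_forall (fun x => le_max_right _ _)) hFint.1.aemeasurable
  have hexpT : Real.exp (-T) = ((4:ℝ)^n)⁻¹ := by
    rw [Real.exp_neg, hT, Real.exp_nat_mul, Real.exp_log (by norm_num : (0:ℝ) < 4)]
  have hbound : ∫⁻ t in Ioi (0:ℝ), (volume.restrict Q) {x | t < F x}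
      ≤ ENNReal.ofReal (V * (T + 1)) := by
    rw [← Ioc_union_Ioi_eq_Ioi hT0.le,
      lintegral_union measurableSet_Ioi (Ioc_disjoint_Ioi le_rfl)]
    have h1 : ∫⁻ t in Ioc (0:ℝ) T, (volume.restrict Q) {x | t < F x}
        ≤ ENNReal.ofReal (V * T) := by
      calc ∫⁻ t in Ioc (0:ℝ) T, (volume.restrict Q) {x | t < F x}
          ≤ ∫⁻ _ in Ioc (0:ℝ) T, volume Q := setLIntegral_mono' measurableSet_Ioc
            (fun t ht => le_trans (hlevel t ht.1) (min_le_left _ _))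
        _ = volume Q * volume (Ioc (0:ℝ) T) := setLIntegral_const _ _
        _ = ENNReal.ofReal (V * T) := by
            rw [hQ, volume_cube n a h hh.le, Real.volume_Ioc, ← hVeq, sub_zero,
              ← ENNReal.ofReal_mul hVpos.le]
    have h2 : ∫⁻ t in Ioi T, (volume.restrict Q) {x | t < F x} ≤ ENNReal.ofReal V := by
      have hint : IntegrableOn (fun t : ℝ => V * Real.exp (-t)) (Ioi T) := by
        have := (exp_neg_integrableOn_Ioi T (one_pos)).const_mul V
        simpa [IntegrableOn] using this
      calc ∫⁻ t in Ioi T, (volume.restrict Q) {x | t < F x}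
          ≤ ∫⁻ t in Ioi T, ENNReal.ofReal ((4:ℝ)^n) * ENNReal.ofReal (V * Real.exp (-t)) :=
            setLIntegral_mono' measurableSet_Ioi
              (fun t ht => le_trans (hlevel t (lt_trans hT0 ht)) (min_le_right _ _))
        _ = ENNReal.ofReal ((4:ℝ)^n) * ∫⁻ t in Ioi T, ENNReal.ofReal (V * Real.exp (-t)) :=
            lintegral_const_mul' _ _ ENNReal.ofReal_ne_top
        _ = ENNReal.ofReal ((4:ℝ)^n) * ENNReal.ofReal (∫ t in Ioi T, V * Real.exp (-t)) := by
            rw [ofReal_integral_eq_lintegral_ofReal hint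
              (Filter.Eventually.of_forall (fun t => by positivity))]
        _ = ENNReal.ofReal ((4:ℝ)^n) * ENNReal.ofReal (V * Real.exp (-T)) := by
            rw [MeasureTheory.integral_const_mul, integral_exp_neg_Ioi]
        _ = ENNReal.ofReal V := by
            rw [← ENNReal.ofReal_mul (by positivity), hexpT]
            congr 1
            field_simp
    calc _ ≤ ENNReal.ofReal (V * T) + ENNReal.ofReal V := add_le_add h1 h2
      _ = ENNReal.ofReal (V * (T + 1)) := by
          rw [← ENNReal.ofReal_add (by positivity) hVpos.le]
          ring_nf
  have hInt_eq : ∫ x in Q, F x = (∫⁻ x in Q, ENNReal.ofReal (F x)).toReal :=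
    integral_eq_lintegral_of_nonneg_ae
      (Filter.Eventually.of_forall (fun x => le_max_right _ _)) hFint.1
  have hfinal : ∫ x in Q, F x ≤ V * (T + 1) := by
    rw [hInt_eq]
    exact ENNReal.toReal_le_of_le_ofReal (by positivity) (hlayer ▸ hbound)
  rw [← hV, inv_mul_le_iff₀ hVpos]
  linarith
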